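/- Let X ∈ St(n,r), let f : ℝ^{n×r} → ℝ be differentiable at X, let h : ℝ^{n×r} → ℝ be convex, and let B : ℝ^{n×r} → ℝ^{n×r} be a linear map that is self-adjoint for the trace inner product and maps T_X into itself. If V* minimizes φ(V) := ⟨∇f(X),V⟩ + (1/2)⟨V,BV⟩ + h(X+V) over the subspace T_X, then there exists ξ in the convex subdifferential ∂h(X+V*) of h at X+V* such that P_X(∇f(X)) + B[V*] + P_X(ξ) = 0. -/

import Mathlib

open Matrix

/-- The trace inner product `⟨A, B⟩ = tr(AᵀB)` on `ℝ^{n×r}`. -/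
noncomputable def tinner {n r : ℕ} (A B : Matrix (Fin n) (Fin r) ℝ) : ℝ := (Aᵀ * B).trace

/-- `V` belongs to the tangent space `T_X = {V : VᵀX + XᵀV = 0}` of the Stiefel manifold at `X`. -/
def IsTangent {n r : ℕ} (X V : Matrix (Fin n) (Fin r) ℝ) : Prop := Vᵀ * X + Xᵀ * V = 0

/-- The orthogonal projection `P_X Z = Z - (1/2) X (XᵀZ + ZᵀX)` onto `T_X`. -/
noncomputable def projT {n r : ℕ} (X Z : Matrix (Fin n) (Fin r) ℝ) : Matrix (Fin n) (Fin r) ℝ :=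
  Z - (1 / 2 : ℝ) • (X * (Xᵀ * Z + Zᵀ * X))

/-- The (Euclidean) convex subdifferential of `h` at `Y`, w.r.t. the trace inner product. -/
def subdiff {n r : ℕ} (h : Matrix (Fin n) (Fin r) ℝ → ℝ) (Y : Matrix (Fin n) (Fin r) ℝ) :
    Set (Matrix (Fin n) (Fin r) ℝ) :=
  {ξ | ∀ Z, h Y + tinner ξ (Z - Y) ≤ h Z}

attribute [local instance] Matrix.frobeniusNormedAddCommGroup Matrix.frobeniusNormedSpace

section Helpers
variable {n r : ℕ}

lemma tinner_eq_sum (A B : Matrix (Fin n) (Fin r) ℝ) :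
    tinner A B = ∑ i, ∑ j, A i j * B i j := by
  simp only [tinner, Matrix.trace, Matrix.diag, Matrix.mul_apply, Matrix.transpose_apply]
  rw [Finset.sum_comm]

lemma tinner_comm (A B : Matrix (Fin n) (Fin r) ℝ) : tinner A B = tinner B A := by
  simp only [tinner_eq_sum, mul_comm]

lemma tinner_add_left (A B C : Matrix (Fin n) (Fin r) ℝ) :
    tinner (A + B) C = tinner A C + tinner B C := by
  simp [tinner_eq_sum, add_mul, Finset.sum_add_distrib]

lemma tinner_add_right (A B C : Matrix (Fin n) (Fin r) ℝ) :
    tinner A (B + C) = tinner A B + tinner A C := by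
  simp [tinner_eq_sum, mul_add, Finset.sum_add_distrib]

lemma tinner_smul_left (c : ℝ) (A B : Matrix (Fin n) (Fin r) ℝ) :
    tinner (c • A) B = c * tinner A B := by
  simp [tinner_eq_sum, Finset.mul_sum, mul_assoc]

lemma tinner_smul_right (c : ℝ) (A B : Matrix (Fin n) (Fin r) ℝ) :
    tinner A (c • B) = c * tinner A B := by
  rw [tinner_comm, tinner_smul_left, tinner_comm]

lemma tinner_zero_right (A : Matrix (Fin n) (Fin r) ℝ) : tinner A 0 = 0 := by
  simp [tinner_eq_sum]

lemma eq_zero_of_tinner_self (A : Matrix (Fin n) (Fin r) ℝ) (hA : tinner A A = 0) : A = 0 := by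
  rw [tinner_eq_sum] at hA
  ext i j
  have h1 : ∀ i ∈ Finset.univ, (0:ℝ) ≤ ∑ j, A i j * A i j := fun i _ =>
    Finset.sum_nonneg fun j _ => mul_self_nonneg _
  have h2 := (Finset.sum_eq_zero_iff_of_nonneg h1).mp hA i (Finset.mem_univ i)
  have h3 := (Finset.sum_eq_zero_iff_of_nonneg (fun j _ => mul_self_nonneg (A i j))).mp h2 j
    (Finset.mem_univ j)
  simpa [mul_self_eq_zero] using h3

lemma isTangent_zero (X : Matrix (Fin n) (Fin r) ℝ) : IsTangent X 0 := by
  simp [IsTangent]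

lemma isTangent_add {X V W : Matrix (Fin n) (Fin r) ℝ} (hV : IsTangent X V)
    (hW : IsTangent X W) : IsTangent X (V + W) := by
  unfold IsTangent at *
  rw [transpose_add, Matrix.add_mul, Matrix.mul_add]
  rw [show Vᵀ * X + Wᵀ * X + (Xᵀ * V + Xᵀ * W)
      = (Vᵀ * X + Xᵀ * V) + (Wᵀ * X + Xᵀ * W) by abel, hV, hW, add_zero]

lemma isTangent_smul {X W : Matrix (Fin n) (Fin r) ℝ} (hW : IsTangent X W) (t : ℝ) :
    IsTangent X (t • W) := by
  unfold IsTangent at *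
  rw [transpose_smul, Matrix.smul_mul, Matrix.mul_smul, ← smul_add, hW, smul_zero]

lemma isTangent_projT {X : Matrix (Fin n) (Fin r) ℝ} (hX : Xᵀ * X = 1)
    (Z : Matrix (Fin n) (Fin r) ℝ) : IsTangent X (projT X Z) := by
  unfold IsTangent projT
  have hS : (Xᵀ * Z + Zᵀ * X)ᵀ = Xᵀ * Z + Zᵀ * X := by
    rw [transpose_add, transpose_mul, transpose_mul, transpose_transpose,
      transpose_transpose, add_comm]
  rw [transpose_sub, transpose_smul, transpose_mul, hS, Matrix.sub_mul, Matrix.mul_sub,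
    Matrix.smul_mul, Matrix.mul_smul, ← Matrix.mul_assoc Xᵀ X, hX, Matrix.mul_assoc _ Xᵀ X, hX, Matrix.mul_one, Matrix.one_mul]
  rw [show Zᵀ * X - (1/2:ℝ) • (Xᵀ * Z + Zᵀ * X) + (Xᵀ * Z - (1/2:ℝ) • (Xᵀ * Z + Zᵀ * X))
      = (Xᵀ * Z + Zᵀ * X) - ((1/2:ℝ) + (1/2:ℝ)) • (Xᵀ * Z + Zᵀ * X) by
    rw [add_smul]; abel]
  norm_num

lemma tinner_projT {X Z W : Matrix (Fin n) (Fin r) ℝ} (hW : IsTangent X W) :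
    tinner (projT X Z) W = tinner Z W := by
  unfold projT
  rw [tinner_comm, tinner_comm Z W]
  rw [show Z - (1/2:ℝ) • (X * (Xᵀ * Z + Zᵀ * X)) = Z + (-(1/2:ℝ)) • (X * (Xᵀ * Z + Zᵀ * X)) by
    rw [neg_smul]; abel]
  rw [tinner_add_right, tinner_smul_right]
  have hkey : tinner W (X * (Xᵀ * Z + Zᵀ * X)) = 0 := by
    unfold tinner
    set S := Xᵀ * Z + Zᵀ * X with hSdef
    have hS : Sᵀ = S := by
      rw [hSdef, transpose_add, transpose_mul, transpose_mul, transpose_transpose,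
        transpose_transpose, add_comm]
    have hA : (Wᵀ * X)ᵀ = -(Wᵀ * X) := by
      rw [transpose_mul, transpose_transpose]
      have := hW
      unfold IsTangent at this
      exact eq_neg_of_add_eq_zero_left (by rw [add_comm]; exact this)
    have h1 : (Wᵀ * (X * S)).trace = ((Wᵀ * X) * S).trace := by
      rw [← Matrix.mul_assoc]
    have h2 : ((Wᵀ * X) * S).trace = -(((Wᵀ * X) * S).trace) := by
      conv_lhs => rw [← Matrix.trace_transpose, transpose_mul, hS, hA,
        Matrix.mul_neg, Matrix.trace_neg, Matrix.trace_mul_comm]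
    rw [h1]; linarith
  rw [hkey, mul_zero, add_zero]

end Helpers

theorem stmt2 {n r : ℕ} (X : Matrix (Fin n) (Fin r) ℝ) (hX : Xᵀ * X = 1)
    (f h : Matrix (Fin n) (Fin r) ℝ → ℝ)
    -- `f` is differentiable at `X` with (Euclidean) gradient `G = ∇f(X)`
    (G : Matrix (Fin n) (Fin r) ℝ) (Lf : Matrix (Fin n) (Fin r) ℝ →L[ℝ] ℝ)
    (hf : HasFDerivAt f Lf X) (hGrad : ∀ V, Lf V = tinner G V)
    -- `h` is convex
    (hconv : ConvexOn ℝ Set.univ h)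
    -- `B` is linear, self-adjoint for the trace inner product and maps `T_X` into itself
    (B : Matrix (Fin n) (Fin r) ℝ →ₗ[ℝ] Matrix (Fin n) (Fin r) ℝ)
    (hBsa : ∀ U V, tinner U (B V) = tinner (B U) V)
    (hBtan : ∀ V, IsTangent X V → IsTangent X (B V))
    -- the objective `φ(V) = ⟨∇f(X),V⟩ + (1/2)⟨V,BV⟩ + h(X+V)`
    (φ : Matrix (Fin n) (Fin r) ℝ → ℝ)
    (hφ : ∀ V, φ V = tinner G V + (1 / 2) * tinner V (B V) + h (X + V))
    -- `V*` minimizes `φ` over `T_X`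
    (Vs : Matrix (Fin n) (Fin r) ℝ) (hVs : IsTangent X Vs)
    (hmin : ∀ V, IsTangent X V → φ Vs ≤ φ V) :
    ∃ ξ ∈ subdiff h (X + Vs), projT X G + B Vs + projT X ξ = 0 := by
  classical
  set Y : Matrix (Fin n) (Fin r) ℝ := X + Vs with hY
  set Mm : Matrix (Fin n) (Fin r) ℝ := G + B Vs with hMm
  -- Step 1: first-order optimality over the tangent space
  have key : ∀ W, IsTangent X W → -(tinner Mm W) ≤ h (Y + W) - h Y := by
    intro W hW
    set a : ℝ := tinner Mm W + (h (Y + W) - h Y) with ha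
    set b : ℝ := (1 / 2) * tinner W (B W) with hb
    have hstep : ∀ t : ℝ, t ∈ Set.Ioc (0 : ℝ) 1 → 0 ≤ a + t * b := by
      rintro t ⟨ht0, ht1⟩
      have htan : IsTangent X (Vs + t • W) := isTangent_add hVs (isTangent_smul hW t)
      have h1 := hmin _ htan
      rw [hφ, hφ] at h1
      have e1 : tinner G (Vs + t • W) = tinner G Vs + t * tinner G W := by
        rw [tinner_add_right, tinner_smul_right]
      have e2 : tinner (Vs + t • W) (B (Vs + t • W))
          = tinner Vs (B Vs) + 2 * (t * tinner (B Vs) W) + t ^ 2 * tinner W (B W) := by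
        rw [map_add, _root_.map_smul]
        rw [tinner_add_left, tinner_add_right, tinner_add_right, tinner_smul_right,
          tinner_smul_left, tinner_smul_left, tinner_smul_right, hBsa Vs W, tinner_comm W (B Vs)]
        ring
      have hcomb := hconv.2 (Set.mem_univ Y) (Set.mem_univ (Y + W))
        (by linarith : (0 : ℝ) ≤ 1 - t) (le_of_lt ht0) (by ring)
      have hpt : (1 - t) • Y + t • (Y + W) = X + (Vs + t • W) := by
        rw [hY]; module
      rw [hpt] at hcomb
      simp only [smul_eq_mul] at hcomb
      have e4 : tinner Mm W = tinner G W + tinner (B Vs) W := by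
        rw [hMm, tinner_add_left]
      have hYeq : h (X + Vs) = h Y := by rw [hY]
      have hfin : 0 ≤ t * (a + t * b) := by
        rw [ha, hb, e4]
        nlinarith [h1, e1, e2, hcomb, hYeq]
      by_contra hlt
      push_neg at hlt
      nlinarith [mul_pos ht0 (by linarith : (0:ℝ) < -(a + t * b))]
    have htend : Filter.Tendsto (fun t : ℝ => a + t * b) (nhdsWithin 0 (Set.Ioi 0)) (nhds a) := by
      have h0 : Filter.Tendsto (fun t : ℝ => a + t * b) (nhds 0) (nhds (a + 0 * b)) :=
        tendsto_const_nhds.add ((continuous_id.mul continuous_const).tendsto 0)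
      simpa using h0.mono_left nhdsWithin_le_nhds
    have h0a : (0 : ℝ) ≤ a :=
      ge_of_tendsto htend (Filter.eventually_of_mem (Ioc_mem_nhdsGT zero_lt_one) hstep)
    rw [ha] at h0a; linarith
  -- Step 2: separation
  have hcont : Continuous h := by
    rw [← continuousOn_univ]
    exact hconv.continuousOn isOpen_univ
  set F : Matrix (Fin n) (Fin r) ℝ → ℝ := fun U => h (Y + U) - h Y with hF
  have hFcont : Continuous F :=
    (hcont.comp (continuous_const.add continuous_id)).sub continuous_const
  have hF0 : F 0 = 0 := by simp [hF]
  have hFconv : ∀ (p q : ℝ) (U V' : Matrix (Fin n) (Fin r) ℝ), 0 ≤ p → 0 ≤ q → p + q = 1 →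
      F (p • U + q • V') ≤ p * F U + q * F V' := by
    intro p q U V' hp hq hpq
    have hcv := hconv.2 (Set.mem_univ (Y + U)) (Set.mem_univ (Y + V')) hp hq hpq
    have h1 : p • (Y + U) + q • (Y + V') = (p + q) • Y + (p • U + q • V') := by module
    rw [hpq, one_smul] at h1
    rw [h1] at hcv
    simp only [smul_eq_mul] at hcv
    have e : p * F U + q * F V' = p * h (Y + U) + q * h (Y + V') - h Y := by
      simp only [hF]; linear_combination (-(h Y)) * hpq
    rw [e]
    simp only [hF]
    linarith
  set A : Set ((Matrix (Fin n) (Fin r) ℝ) × ℝ) := {p | F p.1 < p.2} with hA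
  have hAopen : IsOpen A := isOpen_lt (hFcont.comp continuous_fst) continuous_snd
  have hAconv : Convex ℝ A := by
    intro p hp q hq s t hs ht hst
    simp only [hA, Set.mem_setOf_eq] at hp hq ⊢
    simp only [Prod.fst_add, Prod.snd_add, Prod.smul_fst, Prod.smul_snd, smul_eq_mul]
    calc F (s • p.1 + t • q.1) ≤ s * F p.1 + t * F q.1 := hFconv s t p.1 q.1 hs ht hst
      _ < s * p.2 + t * q.2 := by
        rcases eq_or_lt_of_le hs with hs0 | hs0
        · rcases eq_or_lt_of_le ht with ht0 | ht0
          · exfalso; rw [← hs0, ← ht0] at hst; norm_num at hst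
          · have := mul_lt_mul_of_pos_left hq ht0
            nlinarith
        · have h1 := mul_lt_mul_of_pos_left hp hs0
          have h2 := mul_le_mul_of_nonneg_left (le_of_lt hq) ht
          linarith
  set TB : Set ((Matrix (Fin n) (Fin r) ℝ) × ℝ) :=
    {p | IsTangent X p.1 ∧ p.2 = -(tinner Mm p.1)} with hTB
  have hTBconv : Convex ℝ TB := by
    intro p hp q hq s t hs ht hst
    simp only [hTB, Set.mem_setOf_eq] at hp hq ⊢
    refine ⟨by
      simpa [Prod.fst_add, Prod.smul_fst] using
        isTangent_add (isTangent_smul hp.1 s) (isTangent_smul hq.1 t), ?_⟩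
    simp only [Prod.fst_add, Prod.snd_add, Prod.smul_fst, Prod.smul_snd, smul_eq_mul,
      tinner_add_right, tinner_smul_right, hp.2, hq.2]
    ring
  have hdisj : Disjoint A TB := by
    rw [Set.disjoint_left]
    intro p hpA hpB
    simp only [hA, Set.mem_setOf_eq] at hpA
    simp only [hTB, Set.mem_setOf_eq] at hpB
    have := key p.1 hpB.1
    rw [hpB.2] at hpA
    simp only [hF] at hpA this
    linarith
  obtain ⟨g, c, hgA, hgB⟩ := geometric_hahn_banach_open hAconv hAopen hTBconv hdisj
  have hTB0 : ((0 : Matrix (Fin n) (Fin r) ℝ), (0 : ℝ)) ∈ TB :=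
    ⟨isTangent_zero X, by simp [tinner_zero_right]⟩
  have hc0 : c ≤ 0 := by simpa using hgB 0 hTB0
  have hgB0 : ∀ p ∈ TB, g p = 0 := by
    intro p hp
    by_contra hne
    have hsc : ∀ s : ℝ, s • p ∈ TB := by
      intro s
      exact ⟨by simpa [Prod.smul_fst] using isTangent_smul hp.1 s, by
        simp only [Prod.smul_fst, Prod.smul_snd, smul_eq_mul, tinner_smul_right, hp.2]; ring⟩
    have h2 := hgB _ (hsc ((c - 1) / g p))
    rw [_root_.map_smul, smul_eq_mul, div_mul_cancel₀ _ hne] at h2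
    linarith
  set al : ℝ := g (0, 1) with hal
  have hA01 : ((0 : Matrix (Fin n) (Fin r) ℝ), (1 : ℝ)) ∈ A := by
    simp only [hA, Set.mem_setOf_eq, hF0]; norm_num
  have halneg : al < 0 := lt_of_lt_of_le (hgA _ hA01) hc0
  have halpos : (0 : ℝ) < -al := by linarith
  have hgsplit : ∀ (U : Matrix (Fin n) (Fin r) ℝ) (t : ℝ), g (U, t) = g (U, 0) + t * al := by
    intro U t
    have hh : ((U, t) : (Matrix (Fin n) (Fin r) ℝ) × ℝ) = (U, 0) + t • (0, 1) := by
      simp [Prod.ext_iff]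
    rw [hh, map_add, _root_.map_smul, smul_eq_mul, ← hal]
  have hupper : ∀ U, g (U, 0) / (-al) ≤ F U := by
    intro U
    by_contra hlt
    push_neg at hlt
    set t : ℝ := (F U + g (U, 0) / (-al)) / 2 with htdef
    have h1 : F U < t := by rw [htdef]; linarith
    have h2 : t < g (U, 0) / (-al) := by rw [htdef]; linarith
    have h3 := hgA (U, t) (by simpa [hA] using h1)
    rw [hgsplit] at h3
    rw [lt_div_iff₀ halpos] at h2
    nlinarith
  have htan2 : ∀ W, IsTangent X W → g (W, 0) = al * tinner Mm W := by
    intro W hW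
    have hz := hgB0 (W, -(tinner Mm W)) ⟨hW, rfl⟩
    rw [hgsplit] at hz
    linear_combination hz
  set ξ : Matrix (Fin n) (Fin r) ℝ :=
    Matrix.of fun i j => g (Matrix.single i j 1, 0) / (-al) with hxi
  have hgU : ∀ U : Matrix (Fin n) (Fin r) ℝ,
      g (U, 0) = ∑ i, ∑ j, U i j * g (Matrix.single i j 1, 0) := by
    intro U
    have hrep : ((U, (0 : ℝ)) : (Matrix (Fin n) (Fin r) ℝ) × ℝ)
        = ∑ i, ∑ j, U i j • ((Matrix.single i j 1 : Matrix (Fin n) (Fin r) ℝ), (0 : ℝ)) := by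
      rw [Prod.ext_iff]
      constructor
      · simp only [Prod.fst_sum, Prod.smul_fst, Matrix.smul_single, smul_eq_mul, mul_one]
        exact matrix_eq_sum_single U
      · simp [Prod.snd_sum]
    rw [hrep, map_sum]
    refine Finset.sum_congr rfl fun i _ => ?_
    rw [map_sum]
    exact Finset.sum_congr rfl fun j _ => by rw [_root_.map_smul, smul_eq_mul]
  have hξ : ∀ U, tinner ξ U = g (U, 0) / (-al) := by
    intro U
    rw [hgU U, tinner_eq_sum, Finset.sum_div]
    refine Finset.sum_congr rfl fun i _ => ?_
    rw [Finset.sum_div]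
    refine Finset.sum_congr rfl fun j _ => ?_
    rw [hxi]
    simp only [Matrix.of_apply]
    ring
  refine ⟨ξ, ?_, ?_⟩
  · intro Z
    have hu := hupper (Z - Y)
    rw [← hξ] at hu
    have hYZ : Y + (Z - Y) = Z := by abel
    simp only [hF, hYZ] at hu
    have : h Y + tinner ξ (Z - Y) ≤ h Z := by linarith
    exact this
  · have hQtan : IsTangent X (projT X G + B Vs + projT X ξ) :=
      isTangent_add (isTangent_add (isTangent_projT hX G) (hBtan Vs hVs)) (isTangent_projT hX ξ)
    set Q : Matrix (Fin n) (Fin r) ℝ := projT X G + B Vs + projT X ξ with hQdef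
    have e1 : tinner ξ Q = -(tinner Mm Q) := by
      rw [hξ, htan2 Q hQtan, div_neg, mul_div_cancel_left₀ _ (ne_of_lt halneg)]
    have e2 : tinner Mm Q = tinner G Q + tinner (B Vs) Q := by rw [hMm, tinner_add_left]
    have h1 : tinner Q Q = 0 := by
      nth_rewrite 1 [hQdef]
      rw [tinner_add_left, tinner_add_left, tinner_projT hQtan, tinner_projT hQtan]
      linarith
    exact eq_zero_of_tinner_self Q h1
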